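/- Let C_n be the cycle graph on n ≥ 4 vertices. Then ℓ(C_n) = 2n − 2; that is, there exists a word of length 2n − 2 that word-represents C_n, and every word that word-represents C_n has length at least 2n − 2. -/

import Mathlib

variable {V : Type*}

/-- The restriction of a word `w` to the letters `x` and `y`. -/
def restrictWord [DecidableEq V] (w : List V) (x y : V) : List V :=
  w.filter fun z => decide (z = x ∨ z = y)

/-- `x` and `y` alternate in `w`: the restriction of `w` to `{x, y}` has no two
consecutive equal letters. -/
def Alternates [DecidableEq V] (w : List V) (x y : V) : Prop :=
  (restrictWord w x y).Chain' (· ≠ ·)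

/-- `w` word-represents the simple graph `G`: every vertex occurs in `w`, and two distinct
vertices are adjacent iff they alternate in `w`. -/
def Represents [DecidableEq V] (G : SimpleGraph V) (w : List V) : Prop :=
  (∀ v : V, v ∈ w) ∧ ∀ x y : V, x ≠ y → (G.Adj x y ↔ Alternates w x y)

/-- `ℓ(G)`: the minimal length of a word-representant of `G`. -/
noncomputable def minRepLength [DecidableEq V] (G : SimpleGraph V) : ℕ :=
  sInf {n | ∃ w : List V, Represents G w ∧ w.length = n}

/-- The cycle graph `C_n` on vertex set `Fin n`, with an edge between `i` and `i + 1`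
(indices modulo `n`). -/
def cycleGraph (n : ℕ) : SimpleGraph (Fin n) :=
  SimpleGraph.fromRel fun i j => (i.val + 1) % n = j.val

section Aux
variable {β : Type*}

lemma flatMap_range_nil (g : ℕ → List β) (m : ℕ) (h : ∀ k < m, g k = []) :
    (List.range m).flatMap g = [] := by
  induction m with
  | zero => simp
  | succ m ih =>
    rw [List.range_succ, List.flatMap_append]
    simp [h m (by omega), ih (fun k hk => h k (by omega))]

lemma flatMap_range_one (g : ℕ → List β) (m i : ℕ) (hi : i < m)
    (h : ∀ k < m, k ≠ i → g k = []) : (List.range m).flatMap g = g i := by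
  induction m with
  | zero => omega
  | succ m ih =>
    rw [List.range_succ, List.flatMap_append]
    rcases eq_or_lt_of_le (Nat.lt_succ_iff.mp hi) with rfl | hi'
    · rw [flatMap_range_nil g i (fun k hk => h k (by omega) (by omega))]; simp
    · rw [ih hi' (fun k hk hki => h k (by omega) hki)]; simp [h m (by omega) (by omega)]

lemma flatMap_range_two (g : ℕ → List β) (m i j : ℕ) (hij : i < j) (hj : j < m)
    (h : ∀ k < m, k ≠ i → k ≠ j → g k = []) :
    (List.range m).flatMap g = g i ++ g j := by
  induction m with
  | zero => omega
  | succ m ih =>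
    rw [List.range_succ, List.flatMap_append]
    rcases eq_or_lt_of_le (Nat.lt_succ_iff.mp hj) with rfl | hj'
    · rw [flatMap_range_one g j i hij (fun k hk hki => h k (by omega) hki (by omega))]; simp
    · rw [ih hj' (fun k hk => h k (by omega))]; simp [h m (by omega) (by omega) (by omega)]

lemma flatMap_range_three (g : ℕ → List β) (m i j l : ℕ) (hij : i < j) (hjl : j < l)
    (hl : l < m) (h : ∀ k < m, k ≠ i → k ≠ j → k ≠ l → g k = []) :
    (List.range m).flatMap g = g i ++ g j ++ g l := by
  induction m with
  | zero => omega
  | succ m ih =>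
    rw [List.range_succ, List.flatMap_append]
    rcases eq_or_lt_of_le (Nat.lt_succ_iff.mp hl) with rfl | hl'
    · rw [flatMap_range_two g l i j hij hjl (fun k hk hki hkj => h k (by omega) hki hkj (by omega))]
      simp
    · rw [ih hl' (fun k hk => h k (by omega))]
      simp [h m (by omega) (by omega) (by omega) (by omega)]

lemma flatMap_range_split (g : ℕ → List β) (s t : ℕ) :
    (List.range (s + t)).flatMap g =
      (List.range s).flatMap g ++ ((List.range t).map (s + ·)).flatMap g := by
  rw [List.range_add, List.flatMap_append]

end Aux

/-- The vertex of `Fin n` with value `k % n`. -/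
def fm (n : ℕ) (hn : 0 < n) (k : ℕ) : Fin n := ⟨k % n, Nat.mod_lt k hn⟩

lemma fm_val {n : ℕ} (hn : 0 < n) {k : ℕ} (hk : k < n) : (fm n hn k).val = k := by
  simp [fm, Nat.mod_eq_of_lt hk]

lemma fm_eq_iff {n : ℕ} (hn : 0 < n) {k : ℕ} (hk : k < n) (z : Fin n) :
    fm n hn k = z ↔ k = z.val := by
  rw [Fin.ext_iff, fm_val hn hk]

/-- The word `1 0 2 1 3 2 ⋯ (n-1) (n-2)` representing the cycle. -/
def cword (n : ℕ) (hn : 0 < n) : List (Fin n) :=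
  (List.range (n - 1)).flatMap fun k => [fm n hn (k + 1), fm n hn k]

lemma cword_length {n : ℕ} (hn : 0 < n) : (cword n hn).length = 2 * n - 2 := by
  have key : ∀ l : List ℕ, (l.flatMap fun k => [fm n hn (k + 1), fm n hn k]).length
      = 2 * l.length := by
    intro l
    induction l with
    | nil => simp
    | cons a t ih => simp [ih]; ring
  rw [cword, key, List.length_range]
  omega

lemma cword_mem {n : ℕ} (hn : 4 ≤ n) (hn0 : 0 < n) (v : Fin n) : v ∈ cword n hn0 := by
  rw [cword, List.mem_flatMap]
  have hvn := v.isLt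
  rcases Nat.eq_zero_or_pos v.val with h0 | hpos
  · refine ⟨0, by simp [List.mem_range]; omega, ?_⟩
    simp only [List.mem_cons, List.not_mem_nil, or_false]
    exact Or.inr ((fm_eq_iff hn0 (by omega) v).mpr (by omega)).symm
  · refine ⟨v.val - 1, by simp [List.mem_range]; omega, ?_⟩
    simp only [List.mem_cons, List.not_mem_nil, or_false]
    exact Or.inl ((fm_eq_iff hn0 (by omega) v).mpr (by omega)).symm

section Blocks
variable [DecidableEq V] {x y u v : V}

lemma block_tt (hu : u = x ∨ u = y) (hv : v = x ∨ v = y) :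
    [u, v].filter (fun z => decide (z = x ∨ z = y)) = [u, v] := by
  simp only [List.filter_cons, List.filter_nil, decide_eq_true_eq, if_pos hu, if_pos hv]

lemma block_tf (hu : u = x ∨ u = y) (hv : ¬ (v = x ∨ v = y)) :
    [u, v].filter (fun z => decide (z = x ∨ z = y)) = [u] := by
  simp only [List.filter_cons, List.filter_nil, decide_eq_true_eq, if_pos hu, if_neg hv]

lemma block_ft (hu : ¬ (u = x ∨ u = y)) (hv : v = x ∨ v = y) :
    [u, v].filter (fun z => decide (z = x ∨ z = y)) = [v] := by
  simp only [List.filter_cons, List.filter_nil, decide_eq_true_eq, if_pos hv, if_neg hu]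

lemma block_ff (hu : ¬ (u = x ∨ u = y)) (hv : ¬ (v = x ∨ v = y)) :
    [u, v].filter (fun z => decide (z = x ∨ z = y)) = [] := by
  simp only [List.filter_cons, List.filter_nil, decide_eq_true_eq, if_neg hu, if_neg hv]

end Blocks

lemma restrict_cword {n : ℕ} (hn0 : 0 < n) (x y : Fin n) :
    restrictWord (cword n hn0) x y =
      (List.range (n - 1)).flatMap
        (fun k => [fm n hn0 (k + 1), fm n hn0 k].filter (fun z => decide (z = x ∨ z = y))) := by
  rw [restrictWord, cword, List.filter_flatMap]

set_option maxHeartbeats 1000000 in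
lemma cword_alt_iff {n : ℕ} (hn : 4 ≤ n) (hn0 : 0 < n) (x y : Fin n)
    (hab : x.val < y.val) :
    (y.val = x.val + 1 ∨ (x.val = 0 ∧ y.val = n - 1)) ↔ Alternates (cword n hn0) x y := by
  set a := x.val with ha
  set b := y.val with hb
  have hbn : b < n := y.isLt
  have hxfm : fm n hn0 a = x := by rw [fm_eq_iff hn0 (by omega)]
  have hyfm : fm n hn0 b = y := by rw [fm_eq_iff hn0 (by omega)]
  have hne : ∀ k : ℕ, k < n → k ≠ a → k ≠ b → ¬ (fm n hn0 k = x ∨ fm n hn0 k = y) := by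
    intro k hk hka hkb h
    rcases h with h | h <;> rw [fm_eq_iff hn0 hk] at h <;> omega
  have hxyne : x ≠ y := fun h => by rw [h] at ha; omega
  unfold Alternates
  rw [restrict_cword hn0 x y]
  by_cases hadj1 : b = a + 1
  · -- adjacent, consecutive
    by_cases ha0 : a = 0
    · -- case 1 : restrict = [y, x, y]
      rw [flatMap_range_two _ (n-1) 0 1 (by omega) (by omega)
        (fun k hk h0 h1 => block_ff (hne (k+1) (by omega) (by omega) (by omega))
          (hne k (by omega) (by omega) (by omega)))]
      rw [show (0:ℕ)+1 = b by omega, show (1:ℕ)+1 = 2 by rfl, show (1:ℕ) = b by omega]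
      rw [block_tt (Or.inr hyfm) (Or.inl (by rw [show (0:ℕ) = a by omega]; exact hxfm)),
        block_ft (hne 2 (by omega) (by omega) (by omega)) (Or.inr hyfm)]
      rw [show (0:ℕ) = a by omega, hxfm, hyfm]
      refine iff_of_true (by omega) ?_
      simp only [List.cons_append, List.nil_append, List.Chain', List.isChain_cons_cons, List.isChain_singleton,
        and_true]
      exact ⟨hxyne.symm, hxyne⟩
    · by_cases hbtop : b = n - 1
      · -- case 3 : restrict = [x, y, x]
        rw [flatMap_range_two _ (n-1) (a-1) a (by omega) (by omega)
          (fun k hk h0 h1 => block_ff (hne (k+1) (by omega) (by omega) (by omega))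
            (hne k (by omega) (by omega) (by omega)))]
        rw [show a - 1 + 1 = a by omega, show a + 1 = b by omega]
        rw [block_tf (Or.inl hxfm) (hne (a-1) (by omega) (by omega) (by omega)),
          block_tt (Or.inr hyfm) (Or.inl hxfm)]
        rw [hxfm, hyfm]
        refine iff_of_true (by omega) ?_
        simp only [List.cons_append, List.nil_append, List.Chain', List.isChain_cons_cons, List.isChain_singleton,
          and_true]
        exact ⟨hxyne, hxyne.symm⟩
      · -- case 2 : restrict = [x, y, x, y]
        rw [flatMap_range_three _ (n-1) (a-1) a (a+1) (by omega) (by omega) (by omega)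
          (fun k hk h0 h1 h2 => block_ff (hne (k+1) (by omega) (by omega) (by omega))
            (hne k (by omega) (by omega) (by omega)))]
        rw [show a - 1 + 1 = a by omega, show a + 1 = b by omega, show b + 1 = a + 2 by omega]
        rw [block_tf (Or.inl hxfm) (hne (a-1) (by omega) (by omega) (by omega)),
          block_tt (Or.inr hyfm) (Or.inl hxfm),
          block_ft (hne (a+2) (by omega) (by omega) (by omega)) (Or.inr hyfm)]
        rw [hxfm, hyfm]
        refine iff_of_true (by omega) ?_
        simp only [List.cons_append, List.nil_append, List.Chain', List.isChain_cons_cons, List.isChain_singleton,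
          and_true]
        exact ⟨hxyne, hxyne.symm, hxyne⟩
  · by_cases hwrap : a = 0 ∧ b = n - 1
    · -- case 4 : restrict = [x, y]
      rw [flatMap_range_two _ (n-1) 0 (n-2) (by omega) (by omega)
        (fun k hk h0 h1 => block_ff (hne (k+1) (by omega) (by omega) (by omega))
          (hne k (by omega) (by omega) (by omega)))]
      rw [show (0:ℕ)+1 = 1 by rfl, show n - 2 + 1 = b by omega]
      rw [block_ft (hne 1 (by omega) (by omega) (by omega))
          (Or.inl (by rw [show (0:ℕ) = a by omega]; exact hxfm)),
        block_tf (Or.inr hyfm) (hne (n-2) (by omega) (by omega) (by omega))]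
      rw [show (0:ℕ) = a by omega, hxfm, hyfm]
      refine iff_of_true (by omega) ?_
      simp only [List.cons_append, List.nil_append, List.Chain', List.isChain_cons_cons, List.isChain_singleton,
        and_true]
      exact hxyne
    · -- non-adjacent
      refine iff_of_false (by omega) ?_
      by_cases ha0 : a = 0
      · -- case 6 : restrict begins [x, y, y]
        have hb2 : 2 ≤ b := by omega
        have hbn2 : b ≤ n - 2 := by omega
        rw [show n - 1 = (b + 1) + (n - 2 - b) by omega, flatMap_range_split]
        rw [flatMap_range_three _ (b+1) 0 (b-1) b (by omega) (by omega) (by omega)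
          (fun k hk h0 h1 h2 => block_ff (hne (k+1) (by omega) (by omega) (by omega))
            (hne k (by omega) (by omega) (by omega)))]
        rw [show (0:ℕ)+1 = 1 by rfl, show b - 1 + 1 = b by omega]
        rw [block_ft (hne 1 (by omega) (by omega) (by omega))
            (Or.inl (by rw [show (0:ℕ) = a by omega]; exact hxfm)),
          block_tf (Or.inr hyfm) (hne (b-1) (by omega) (by omega) (by omega)),
          block_ft (hne (b+1) (by omega) (by omega) (by omega)) (Or.inr hyfm)]
        intro hch
        simp only [List.cons_append, List.nil_append, List.Chain', List.isChain_cons_cons] at hch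
        exact hch.2.1 rfl
      · -- case 5 : restrict begins [x, x]
        rw [show n - 1 = (a + 1) + (n - 2 - a) by omega, flatMap_range_split]
        rw [flatMap_range_two _ (a+1) (a-1) a (by omega) (by omega)
          (fun k hk h0 h1 => block_ff (hne (k+1) (by omega) (by omega) (by omega))
            (hne k (by omega) (by omega) (by omega)))]
        rw [show a - 1 + 1 = a by omega]
        rw [block_tf (Or.inl hxfm) (hne (a-1) (by omega) (by omega) (by omega)),
          block_ft (hne (a+1) (by omega) (by omega) (by omega)) (Or.inl hxfm)]
        intro hch
        simp only [List.cons_append, List.nil_append, List.Chain', List.isChain_cons_cons] at hch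
        exact hch.1 rfl


lemma cycle_adj_iff {n : ℕ} (hn : 4 ≤ n) (x y : Fin n) :
    (cycleGraph n).Adj x y ↔ x ≠ y ∧
      (x.val + 1 = y.val ∨ y.val + 1 = x.val ∨ (x.val = 0 ∧ y.val = n - 1) ∨
        (y.val = 0 ∧ x.val = n - 1)) := by
  have hx := x.isLt; have hy := y.isLt
  have key : ∀ a b : ℕ, a < n → b < n →
      ((a + 1) % n = b ↔ (a + 1 = b ∨ (a = n - 1 ∧ b = 0))) := by
    intro a b ha hb
    rcases eq_or_lt_of_le (Nat.succ_le_of_lt ha) with h | h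
    · rw [show a + 1 = n from h, Nat.mod_self]; omega
    · rw [Nat.mod_eq_of_lt h]; omega
  constructor
  · rintro ⟨hne, h | h⟩
    · rw [key _ _ hx hy] at h
      exact ⟨hne, by omega⟩
    · rw [key _ _ hy hx] at h
      exact ⟨hne, by omega⟩
  · rintro ⟨hne, h⟩
    refine ⟨hne, ?_⟩
    show (x.val + 1) % n = y.val ∨ (y.val + 1) % n = x.val
    rw [key _ _ hx hy, key _ _ hy hx]
    omega

lemma cycle_triangle_free {n : ℕ} (hn : 4 ≤ n) (a b c : Fin n)
    (hab : (cycleGraph n).Adj a b) (hac : (cycleGraph n).Adj a c)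
    (hbc : (cycleGraph n).Adj b c) : False := by
  rw [cycle_adj_iff hn] at hab hac hbc
  obtain ⟨ne1, h1⟩ := hab; obtain ⟨ne2, h2⟩ := hac; obtain ⟨ne3, h3⟩ := hbc
  have e1 : a.val ≠ b.val := fun h => ne1 (Fin.ext h)
  have e2 : a.val ≠ c.val := fun h => ne2 (Fin.ext h)
  have e3 : b.val ≠ c.val := fun h => ne3 (Fin.ext h)
  have := a.isLt; have := b.isLt; have := c.isLt
  omega

lemma restrict_cons [DecidableEq V] (a : V) (t : List V) (x y : V) :
    restrictWord (a :: t) x y =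
      if a = x ∨ a = y then a :: restrictWord t x y else restrictWord t x y := by
  simp only [restrictWord, List.filter_cons, decide_eq_true_eq]

lemma countP_pair [DecidableEq V] (w : List V) (x y : V) (hxy : x ≠ y) :
    (restrictWord w x y).length = w.count x + w.count y := by
  induction w with
  | nil => simp [restrictWord]
  | cons a t ih =>
    rw [restrict_cons]
    split_ifs with h
    · rcases h with rfl | rfl
      · simp [List.count_cons, ih, hxy]
        omega
      · simp [List.count_cons, ih, Ne.symm hxy]
        omega
    · push_neg at h
      simp [List.count_cons, ih, Ne.symm h.1, Ne.symm h.2, h.1, h.2]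

lemma sum_count_eq_length [DecidableEq V] [Fintype V] (w : List V) :
    ∑ v : V, w.count v = w.length := by
  induction w with
  | nil => simp
  | cons a t ih =>
    simp only [List.count_cons, List.length_cons, Finset.sum_add_distrib, ih]
    simp

lemma lower_bound {n : ℕ} (hn : 4 ≤ n) (w : List (Fin n))
    (hw : Represents (cycleGraph n) w) : 2 * n - 2 ≤ w.length := by
  obtain ⟨hmem, hiff⟩ := hw
  set S : Finset (Fin n) := Finset.univ.filter (fun v => w.count v = 1) with hS
  have hcount1 : ∀ v : Fin n, 1 ≤ w.count v := fun v => List.one_le_count_iff.mpr (hmem v)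
  -- any two distinct vertices of S are adjacent
  have hadj : ∀ x y : Fin n, x ∈ S → y ∈ S → x ≠ y → (cycleGraph n).Adj x y := by
    intro x y hx hy hxy
    rw [hS, Finset.mem_filter] at hx hy
    have hlen : (restrictWord w x y).length = 2 := by
      rw [countP_pair w x y hxy, hx.2, hy.2]
    obtain ⟨c, d, hcd⟩ := List.length_eq_two.mp hlen
    rw [hiff x y hxy]
    have hcdne : c ≠ d := by
      rintro rfl
      have hcmem : c ∈ restrictWord w x y := by rw [hcd]; simp
      have hc : c = x ∨ c = y := by
        have := List.of_mem_filter hcmem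
        simpa using this
      have hsub : (restrictWord w x y).Sublist w := List.filter_sublist
      have h2 : (restrictWord w x y).count c = 2 := by rw [hcd]; simp
      have hle := hsub.count_le c
      rw [h2] at hle
      rcases hc with rfl | rfl
      · omega
      · omega
    unfold Alternates
    rw [hcd]
    exact List.isChain_cons_cons.mpr ⟨hcdne, List.isChain_singleton d⟩
  -- S has at most 2 elements
  have hScard : S.card ≤ 2 := by
    by_contra h
    have h3 : 2 < S.card := by omega
    obtain ⟨a, b, c, ha, hb, hc, hab, hac, hbc⟩ := Finset.two_lt_card_iff.mp h3
    exact cycle_triangle_free hn a b c (hadj a b ha hb hab) (hadj a c ha hc hac)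
      (hadj b c hb hc hbc)
  -- counting
  have hbound : ∀ v : Fin n, v ∉ S → 2 ≤ w.count v := by
    intro v hv
    rw [hS, Finset.mem_filter] at hv
    have := hcount1 v
    simp only [Finset.mem_univ, true_and] at hv
    omega
  have hsplit := Finset.sum_add_sum_compl S (fun v => w.count v)
  have h1 : ∑ v ∈ S, w.count v = S.card := by
    rw [Finset.sum_congr rfl (fun v hv => (Finset.mem_filter.mp hv).2)]
    simp [hS]
  have h2 : 2 * Sᶜ.card ≤ ∑ v ∈ Sᶜ, w.count v := by
    calc 2 * Sᶜ.card = ∑ _v ∈ Sᶜ, 2 := by rw [Finset.sum_const]; ring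
      _ ≤ _ := Finset.sum_le_sum fun v hv => hbound v (Finset.mem_compl.mp hv)
  have hcard := Finset.card_add_card_compl S
  rw [sum_count_eq_length w] at hsplit
  rw [Fintype.card_fin] at hcard
  omega


lemma restrict_symm [DecidableEq V] (w : List V) (x y : V) :
    restrictWord w x y = restrictWord w y x :=
  List.filter_congr (fun a _ => decide_eq_decide.mpr or_comm)

lemma alternates_symm [DecidableEq V] (w : List V) (x y : V) :
    Alternates w x y ↔ Alternates w y x := by
  rw [Alternates, Alternates, restrict_symm]

lemma cword_represents {n : ℕ} (hn : 4 ≤ n) (hn0 : 0 < n) :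
    Represents (cycleGraph n) (cword n hn0) := by
  refine ⟨cword_mem hn hn0, fun x y hxy => ?_⟩
  rcases lt_trichotomy x.val y.val with h | h | h
  · rw [cycle_adj_iff hn, ← cword_alt_iff hn hn0 x y h]
    constructor
    · rintro ⟨-, hh⟩; omega
    · intro hh; exact ⟨hxy, by omega⟩
  · exact absurd (Fin.ext h) hxy
  · rw [(cycleGraph n).adj_comm, alternates_symm, cycle_adj_iff hn,
      ← cword_alt_iff hn hn0 y x h]
    constructor
    · rintro ⟨-, hh⟩; omega
    · intro hh; exact ⟨hxy.symm, by omega⟩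

/-- For `n ≥ 4`, `ℓ(C_n) = 2n − 2`: there is a word of length `2n − 2`
word-representing the cycle `C_n`, and every word-representant of `C_n` has length at
least `2n − 2`. -/
theorem cycle_min_length (n : ℕ) (hn : 4 ≤ n) :
    (∃ w : List (Fin n), Represents (cycleGraph n) w ∧ w.length = 2 * n - 2) ∧
    (∀ w : List (Fin n), Represents (cycleGraph n) w → 2 * n - 2 ≤ w.length) := by
  have hn0 : 0 < n := by omega
  exact ⟨⟨cword n hn0, cword_represents hn hn0, cword_length hn0⟩,
    fun w hw => lower_bound hn w hw⟩
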